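/- Let n ≥ 1, let N ≥ 2 be even, and let λ ∈ ℤ^n. Suppose there exist σ ∈ W and k ∈ ℤ^n such that σ(λ+ρ) + (N/2)·k = λ+ρ and ε'(σ)·(−1)^{k_1+⋯+k_n} = −1. Then S'_{λ,μ} = 0 for every μ ∈ ℤ^n. (In particular, the function λ ↦ S'_{λ,μ} vanishes on the walls of the fundamental alcove, i.e., for λ ∈ the closed alcove but not its interior.) -/

import Mathlib

open Complex Finset

/-- `qp N r = exp(2πi r / N)`, i.e. `q^r` for `q = exp(2πi/N)`. -/
noncomputable def qp (N : ℕ) (r : ℚ) : ℂ :=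
  Complex.exp (2 * (Real.pi : ℂ) * Complex.I * (r : ℂ) / (N : ℂ))

/-- The Weyl vector of `osp(1|2n)`: `ρ_j = n - j + 1/2` for `j = 1, …, n`
(0-indexed: `ρ j = n - j - 1/2`). -/
def rhoV (n : ℕ) : Fin n → ℚ := fun j => (n : ℚ) - (j : ℚ) - 1/2

/-- The standard dot product on `ℚ^n`. -/
def dotp {n : ℕ} (x y : Fin n → ℚ) : ℚ := ∑ j, x j * y j

/-- Coercion of an integer vector to a rational vector. -/
def intC {n : ℕ} (lam : Fin n → ℤ) : Fin n → ℚ := fun j => (lam j : ℚ)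

/-- Coercion of an element of `X_M = {0,…,M-1}^n` to a rational vector. -/
def finC {n M : ℕ} (mu : Fin n → Fin M) : Fin n → ℚ := fun j => ((mu j : ℕ) : ℚ)

/-- The `j`-th standard basis vector of `ℚ^n`. -/
def stdB (n : ℕ) (j : Fin n) : Fin n → ℚ := fun l => if l = j then 1 else 0

/-- The hyperoctahedral group (Weyl group of `osp(1|2n)`): a permutation with signs. -/
abbrev HypOct (n : ℕ) := Equiv.Perm (Fin n) × (Fin n → ℤˣ)

/-- Action of the hyperoctahedral group on `ℚ^n` by signed permutation of coordinates. -/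
def Wact {n : ℕ} (σ : HypOct n) (x : Fin n → ℚ) : Fin n → ℚ :=
  fun j => ((σ.2 j : ℤ) : ℚ) * x (σ.1⁻¹ j)

/-- `ε'(σ) = sgn(π) · ∏_j s_j` for `σ = (π, s)`. -/
def epsW {n : ℕ} (σ : HypOct n) : ℤˣ :=
  Equiv.Perm.sign σ.1 * ∏ j, σ.2 j

/-- `S'_{λ,μ} = Σ_{σ∈W} ε'(σ) q^{2(λ+ρ, σ(μ+ρ))}` (for rational vectors `λ, μ`). -/
noncomputable def Sprime (n N : ℕ) (lam mu : Fin n → ℚ) : ℂ :=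
  ∑ σ : HypOct n,
    ((epsW σ : ℤ) : ℂ) * qp N (2 * dotp (lam + rhoV n) (Wact σ (mu + rhoV n)))

/-- `Q_μ = Σ_{σ∈W} ε'(σ) q^{2(ρ, σ(μ+ρ))}`. -/
noncomputable def Qmu (n N : ℕ) (mu : Fin n → ℤ) : ℂ :=
  ∑ σ : HypOct n,
    ((epsW σ : ℤ) : ℂ) * qp N (2 * dotp (rhoV n) (Wact σ (intC mu + rhoV n)))

/-- Gauss sum `G(N,m) = Σ_{j=0}^{N-1} q^{j(j+m)}` with `q = exp(2πi/N)`. -/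
noncomputable def GaussG (N : ℕ) (m : ℤ) : ℂ :=
  ∑ j : Fin N, qp N ((j : ℚ) * ((j : ℚ) + (m : ℚ)))

/-- `Σ_{μ ∈ X_M} q^{(μ, μ+2ρ)}` where `q = exp(2πi/N)`. -/
noncomputable def sumX (n N M : ℕ) : ℂ :=
  ∑ mu : Fin n → Fin M, qp N (dotp (finC mu) (finC mu + 2 • rhoV n))

/-- `Σ_{λ ∈ X_M} q^{(λ,λ)} S'_{λ,μ}` where `q = exp(2πi/N)`. -/
noncomputable def sumXS (n N M : ℕ) (mu : Fin n → ℤ) : ℂ :=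
  ∑ lam : Fin n → Fin M, qp N (dotp (finC lam) (finC lam)) * Sprime n N (finC lam) (intC mu)

def mulH {n : ℕ} (σ τ : HypOct n) : HypOct n :=
  (σ.1 * τ.1, fun j => σ.2 j * τ.2 (σ.1⁻¹ j))
def invH {n : ℕ} (σ : HypOct n) : HypOct n :=
  (σ.1⁻¹, fun j => σ.2 (σ.1 j))

lemma Wact_mulH {n : ℕ} (σ τ : HypOct n) (x : Fin n → ℚ) :
    Wact (mulH σ τ) x = Wact σ (Wact τ x) := by
  funext j
  simp [Wact, mulH, mul_assoc]

lemma mulH_left_inv {n : ℕ} (σ τ : HypOct n) : mulH (invH σ) (mulH σ τ) = τ := by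
  refine Prod.ext (by simp [mulH, invH, mul_assoc]) ?_
  funext j
  simp only [mulH, invH, Equiv.Perm.coe_inv, Equiv.symm_apply_apply, inv_inv, Equiv.apply_symm_apply]
  rw [← mul_assoc, Int.units_mul_self, one_mul]

lemma mulH_right_inv {n : ℕ} (σ τ : HypOct n) : mulH σ (mulH (invH σ) τ) = τ := by
  refine Prod.ext (by simp [mulH, invH, mul_assoc]) ?_
  funext j
  simp only [mulH, invH, Equiv.Perm.coe_inv, Equiv.symm_apply_apply, inv_inv, Equiv.apply_symm_apply]
  rw [← mul_assoc, Int.units_mul_self, one_mul]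

lemma mulH_bijective {n : ℕ} (σ : HypOct n) : Function.Bijective (mulH σ) :=
  Function.bijective_iff_has_inverse.mpr ⟨mulH (invH σ),
    fun τ => mulH_left_inv σ τ, fun τ => mulH_right_inv σ τ⟩

lemma epsW_mulH {n : ℕ} (σ τ : HypOct n) : epsW (mulH σ τ) = epsW σ * epsW τ := by
  unfold epsW mulH
  simp only [Equiv.Perm.sign_mul, Finset.prod_mul_distrib]
  rw [Equiv.prod_comp σ.1⁻¹ τ.2]
  exact mul_mul_mul_comm _ _ _ _

lemma dotp_Wact_Wact {n : ℕ} (σ : HypOct n) (x y : Fin n → ℚ) :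
    dotp (Wact σ x) (Wact σ y) = dotp x y := by
  unfold dotp Wact
  rw [← Equiv.sum_comp σ.1 (fun j => ((σ.2 j : ℤ) : ℚ) * x (σ.1⁻¹ j) *
    (((σ.2 j : ℤ) : ℚ) * y (σ.1⁻¹ j)))]
  refine Finset.sum_congr rfl fun l _ => ?_
  rcases Int.units_eq_one_or (σ.2 (σ.1 l)) with h | h <;> simp [h]

lemma dotp_sub_left {n : ℕ} (x y z : Fin n → ℚ) :
    dotp (x - y) z = dotp x z - dotp y z := by
  unfold dotp
  rw [← Finset.sum_sub_distrib]
  exact Finset.sum_congr rfl fun j _ => by simp [sub_mul]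

lemma dotp_smul_left {n : ℕ} (c : ℚ) (x z : Fin n → ℚ) :
    dotp (c • x) z = c * dotp x z := by
  unfold dotp
  rw [Finset.mul_sum]
  exact Finset.sum_congr rfl fun j _ => by simp [mul_assoc]

lemma qp_add (N : ℕ) (hN : (N:ℂ) ≠ 0) (a b : ℚ) : qp N (a + b) = qp N a * qp N b := by
  unfold qp
  rw [← Complex.exp_add]
  congr 1
  push_cast
  field_simp

lemma qp_half_even (N : ℕ) (hN : (N:ℂ) ≠ 0) (c : ℤ) (hc : Even c) :
    qp N ((N : ℚ) * (c : ℚ) / 2) = 1 := by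
  obtain ⟨r, hr⟩ := hc
  unfold qp
  have harg : 2 * (Real.pi : ℂ) * Complex.I * (((N : ℚ) * (c : ℚ) / 2 : ℚ) : ℂ) / (N : ℂ)
      = (r : ℂ) * (2 * Real.pi * Complex.I) := by
    push_cast [hr]
    field_simp
    ring
  rw [harg, Complex.exp_int_mul_two_pi_mul_I]

lemma qp_half_odd (N : ℕ) (hN : (N:ℂ) ≠ 0) (c : ℤ) (hc : Odd c) :
    qp N ((N : ℚ) * (c : ℚ) / 2) = -1 := by
  obtain ⟨r, hr⟩ := hc
  unfold qp
  have harg : 2 * (Real.pi : ℂ) * Complex.I * (((N : ℚ) * (c : ℚ) / 2 : ℚ) : ℂ) / (N : ℂ)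
      = (r : ℂ) * (2 * Real.pi * Complex.I) + Real.pi * Complex.I := by
    push_cast [hr]
    field_simp
  rw [harg, Complex.exp_add, Complex.exp_int_mul_two_pi_mul_I, Complex.exp_pi_mul_I, one_mul]

/-- parity claim: twice (k, ν(μ+ρ)) is an integer congruent to Σ k mod 2. -/
lemma parity_claim {n : ℕ} (k mu : Fin n → ℤ) (ν : HypOct n) :
    ∃ c : ℤ, (c : ℚ) = 2 * dotp (intC k) (Wact ν (intC mu + rhoV n)) ∧
      Even (c - ∑ j, k j) := by
  refine ⟨∑ j, k j * ((ν.2 j : ℤ) *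
      (2 * mu (ν.1⁻¹ j) + 2 * (n : ℤ) - 2 * ((ν.1⁻¹ j : Fin n) : ℤ) - 1)), ?_, ?_⟩
  · unfold dotp Wact intC rhoV
    push_cast
    rw [Finset.mul_sum]
    refine Finset.sum_congr rfl fun j _ => ?_
    simp only [Pi.add_apply]
    push_cast
    ring
  · rw [← Finset.sum_sub_distrib]
    refine even_iff_two_dvd.mpr (Finset.dvd_sum fun j _ => even_iff_two_dvd.mp ?_)
    have hM : Odd ((ν.2 j : ℤ) *
        (2 * mu (ν.1⁻¹ j) + 2 * (n : ℤ) - 2 * ((ν.1⁻¹ j : Fin n) : ℤ) - 1)) := by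
      have hbase : Odd (2 * mu (ν.1⁻¹ j) + 2 * (n : ℤ) - 2 * ((ν.1⁻¹ j : Fin n) : ℤ) - 1) :=
        ⟨mu (ν.1⁻¹ j) + (n : ℤ) - ((ν.1⁻¹ j : Fin n) : ℤ) - 1, by ring⟩
      rcases Int.units_eq_one_or (ν.2 j) with h | h
      · rw [h, Units.val_one, one_mul]; exact hbase
      · rw [h, Units.val_neg, Units.val_one, neg_one_mul]; exact hbase.neg
    obtain ⟨r, hr⟩ := hM
    have : k j * (ν.2 j : ℤ) * (2 * mu (ν.1⁻¹ j) + 2 * (n : ℤ)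
        - 2 * ((ν.1⁻¹ j : Fin n) : ℤ) - 1) - k j = k j * (2 * r) := by
      rw [mul_assoc, hr]; ring
    rw [← mul_assoc]
    rw [this]
    exact ⟨k j * r, by ring⟩

lemma units_neg_one_zpow_odd (m : ℤ) (h : Odd m) : (-1 : ℤˣ) ^ m = -1 := by
  obtain ⟨r, hr⟩ := h
  rw [hr, zpow_add, zpow_one, zpow_mul, zpow_two]
  simp

lemma units_neg_one_zpow_even (m : ℤ) (h : Even m) : (-1 : ℤˣ) ^ m = 1 :=
  Even.neg_one_zpow h


/-- For even `N ≥ 2` and `λ ∈ ℤ^n`: if there are `σ ∈ W` and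
`k ∈ ℤ^n` with `σ(λ+ρ) + (N/2)k = λ+ρ` and `ε'(σ)·(−1)^{k_1+⋯+k_n} = −1`,
then `S'_{λ,μ} = 0` for every `μ ∈ ℤ^n`. -/
theorem Sprime_vanishes_on_walls (n N : ℕ) (hn : 1 ≤ n) (hN : 2 ≤ N) (hNe : 2 ∣ N)
    (lam : Fin n → ℤ)
    (h : ∃ (σ : HypOct n) (k : Fin n → ℤ),
        Wact σ (intC lam + rhoV n) + ((N : ℚ) / 2) • intC k = intC lam + rhoV n ∧
        epsW σ * (-1 : ℤˣ) ^ (∑ j, k j) = -1) :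
    ∀ mu : Fin n → ℤ, Sprime n N (intC lam) (intC mu) = 0 := by
  intro mu
  obtain ⟨σ, k, hfix, hsgn⟩ := h
  have hN0 : (N : ℂ) ≠ 0 := by
    simp only [ne_eq, Nat.cast_eq_zero]; omega
  set v : Fin n → ℚ := intC lam + rhoV n with hv
  set u : Fin n → ℚ := intC mu + rhoV n with hu
  set F : HypOct n → ℂ :=
    fun τ => ((epsW τ : ℤ) : ℂ) * qp N (2 * dotp v (Wact τ u)) with hF
  have hS : Sprime n N (intC lam) (intC mu) = ∑ τ, F τ := rfl
  -- Wact σ v = v - (N/2) • intC k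
  have hWv : Wact σ v = v - ((N : ℚ) / 2) • intC k :=
    eq_sub_of_add_eq hfix
  have key : ∀ τ : HypOct n, F (mulH σ τ) = -F τ := by
    intro τ
    obtain ⟨c, hc, hpar⟩ := parity_claim k mu (mulH σ τ)
    have hdot : dotp v (Wact (mulH σ τ) u)
        = dotp v (Wact τ u) + ((N : ℚ) / 2) * dotp (intC k) (Wact (mulH σ τ) u) := by
      have h1 : dotp v (Wact τ u) = dotp (Wact σ v) (Wact σ (Wact τ u)) :=
        (dotp_Wact_Wact σ v (Wact τ u)).symm
      rw [← Wact_mulH] at h1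
      rw [h1, hWv, dotp_sub_left, dotp_smul_left]
      ring
    have harg : 2 * dotp v (Wact (mulH σ τ) u)
        = 2 * dotp v (Wact τ u) + (N : ℚ) * (c : ℚ) / 2 := by
      rw [hdot, hc]; ring
    have hqp : qp N (2 * dotp v (Wact (mulH σ τ) u))
        = qp N (2 * dotp v (Wact τ u)) * qp N ((N : ℚ) * (c : ℚ) / 2) := by
      rw [harg, qp_add N hN0]
    simp only [hF, epsW_mulH, hqp]
    rcases Int.even_or_odd (∑ j, k j) with hek | hok
    · -- Σk even : epsW σ = -1, c even
      have hc_even : Even c := by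
        have := hpar.add hek
        simpa using this
      have hsig : epsW σ = -1 := by
        rwa [units_neg_one_zpow_even _ hek, mul_one] at hsgn
      rw [qp_half_even N hN0 c hc_even, hsig]
      push_cast
      ring
    · -- Σk odd : epsW σ = 1, c odd
      have hc_odd : Odd c := by
        have : Odd (c - ∑ j, k j + ∑ j, k j) := hpar.add_odd hok
        simpa using this
      have hsig : epsW σ = 1 := by
        have h1 := hsgn
        rw [units_neg_one_zpow_odd _ hok] at h1
        have : epsW σ * -1 * -1 = -1 * -1 := by rw [h1]
        simpa using this
      rw [qp_half_odd N hN0 c hc_odd, hsig]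
      push_cast
      ring
  have hsum : ∑ τ, F τ = ∑ τ, F (mulH σ τ) :=
    (Function.Bijective.sum_comp (mulH_bijective σ) F).symm
  rw [hS]
  have h3 : (∑ τ, F τ) + ∑ τ, F τ = 0 := by
    nth_rewrite 1 [hsum]
    rw [Finset.sum_congr rfl (fun τ _ => key τ)]
    simp
  exact add_self_eq_zero.mp h3
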